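/- Under the setup Σ' = pΣ + VᵀDV with Σ, D positive definite, p ∈ (0,1): for any v ∈ ℝ^d with V Σ⁻¹ v ≠ 0, the quadratic form satisfies (√p v)ᵀ (Σ')⁻¹ (√p v) < vᵀ Σ⁻¹ v. -/

import Mathlib

open Matrix

lemma posdef_smul_aux {d : ℕ} {A : Matrix (Fin d) (Fin d) ℝ} (hA : A.PosDef)
    {p : ℝ} (hp : 0 < p) : (p • A).PosDef := by
  refine PosDef.of_dotProduct_mulVec_pos ?_ (fun x hx => ?_)
  · unfold Matrix.IsHermitian
    rw [conjTranspose_smul, hA.isHermitian.eq]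
    simp
  · rw [smul_mulVec, dotProduct_smul, smul_eq_mul]
    exact mul_pos hp (hA.dotProduct_mulVec_pos hx)

/-- Strict decrease of the quadratic form under thinning. -/
theorem thinned_quadratic_form_strict_lt {K d : ℕ}
    (Sg : Matrix (Fin d) (Fin d) ℝ) (D : Matrix (Fin K) (Fin K) ℝ)
    (V : Matrix (Fin K) (Fin d) ℝ)
    (hSg : Sg.PosDef) (hD : D.PosDef)
    (p : ℝ) (hp : p ∈ Set.Ioo (0 : ℝ) 1)
    (Sgg : Matrix (Fin d) (Fin d) ℝ) (hSgg : Sgg = p • Sg + Vᵀ * D * V)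
    (v : Fin d → ℝ) (hx : V *ᵥ (Sg⁻¹ *ᵥ v) ≠ 0) :
    (Real.sqrt p • v) ⬝ᵥ (Sgg⁻¹ *ᵥ (Real.sqrt p • v)) < v ⬝ᵥ (Sg⁻¹ *ᵥ v) := by
  obtain ⟨hp0, hp1⟩ := hp
  have hps : (0:ℝ) < Real.sqrt p := Real.sqrt_pos.mpr hp0
  have hsq : Real.sqrt p * Real.sqrt p = p := Real.mul_self_sqrt hp0.le
  -- over ℝ, conjTranspose = transpose
  have hct : ∀ {m n : ℕ} (B : Matrix (Fin m) (Fin n) ℝ), Bᴴ = Bᵀ := by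
    intro m n B; ext i j; simp [conjTranspose]
  have hVDV : (Vᵀ * D * V).PosSemidef := by
    have := hD.posSemidef.conjTranspose_mul_mul_same V
    rwa [hct] at this
  have hSgg' : Sgg.PosDef := by
    rw [hSgg]
    exact (posdef_smul_aux hSg hp0).add_posSemidef hVDV
  set y := Sg⁻¹ *ᵥ v with hy
  set z := Sgg⁻¹ *ᵥ (Real.sqrt p • v) with hz
  have hSgy : Sg *ᵥ y = v := by
    rw [hy, mulVec_mulVec, mul_nonsing_inv _ (isUnit_iff_ne_zero.mpr hSg.det_pos.ne'), one_mulVec]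
  have hSggz : Sgg *ᵥ z = Real.sqrt p • v := by
    rw [hz, mulVec_mulVec, mul_nonsing_inv _ (isUnit_iff_ne_zero.mpr hSgg'.det_pos.ne'), one_mulVec]
  -- key relation: p • (Sg *ᵥ z) = √p • v - (Vᵀ*D*V) *ᵥ z
  have hkey : p • (Sg *ᵥ z) = Real.sqrt p • v - (Vᵀ * D * V) *ᵥ z := by
    have : (p • Sg + Vᵀ * D * V) *ᵥ z = Real.sqrt p • v := by rw [← hSgg]; exact hSggz
    rw [add_mulVec, smul_mulVec] at this
    linear_combination (norm := module) this
  -- symmetry of Sg in dot products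
  have hsym : ∀ a b : Fin d → ℝ, a ⬝ᵥ (Sg *ᵥ b) = (Sg *ᵥ a) ⬝ᵥ b := by
    intro a b
    have hTs : Sgᵀ = Sg := by
      have := hSg.isHermitian.eq
      rwa [hct] at this
    rw [dotProduct_mulVec, ← mulVec_transpose, hTs]
  set w := y - Real.sqrt p • z with hw
  have hVz : (Vᵀ * D * V) *ᵥ z = Vᵀ *ᵥ (D *ᵥ (V *ᵥ z)) := by
    rw [← mulVec_mulVec, ← mulVec_mulVec]
  have hzVDVz : z ⬝ᵥ ((Vᵀ * D * V) *ᵥ z) = (V *ᵥ z) ⬝ᵥ (D *ᵥ (V *ᵥ z)) := by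
    rw [hVz, dotProduct_mulVec, vecMul_transpose]
  -- the main identity
  have hident : v ⬝ᵥ y - (Real.sqrt p • v) ⬝ᵥ z
      = w ⬝ᵥ (Sg *ᵥ w) + (V *ᵥ z) ⬝ᵥ (D *ᵥ (V *ᵥ z)) := by
    have e1 : w ⬝ᵥ (Sg *ᵥ w)
        = y ⬝ᵥ (Sg *ᵥ y) - Real.sqrt p * (y ⬝ᵥ (Sg *ᵥ z))
          - Real.sqrt p * (z ⬝ᵥ (Sg *ᵥ y))
          + (Real.sqrt p * Real.sqrt p) * (z ⬝ᵥ (Sg *ᵥ z)) := by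
      simp only [hw, mulVec_sub, mulVec_smul, sub_dotProduct, dotProduct_sub,
        smul_dotProduct, dotProduct_smul, smul_eq_mul]
      ring
    have e2 : y ⬝ᵥ (Sg *ᵥ y) = v ⬝ᵥ y := by
      rw [hsym, hSgy]
    have e3 : y ⬝ᵥ (Sg *ᵥ z) = v ⬝ᵥ z := by
      rw [hsym, hSgy]
    have e4 : z ⬝ᵥ (Sg *ᵥ y) = z ⬝ᵥ v := by rw [hSgy]
    have e5 : p * (z ⬝ᵥ (Sg *ᵥ z)) = Real.sqrt p * (z ⬝ᵥ v) - (V *ᵥ z) ⬝ᵥ (D *ᵥ (V *ᵥ z)) := by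
      have : z ⬝ᵥ (p • (Sg *ᵥ z)) = z ⬝ᵥ (Real.sqrt p • v - (Vᵀ * D * V) *ᵥ z) := by
        rw [hkey]
      rw [dotProduct_smul, smul_eq_mul, dotProduct_sub, dotProduct_smul, smul_eq_mul,
        hzVDVz] at this
      exact this
    have e6 : (Real.sqrt p • v) ⬝ᵥ z = Real.sqrt p * (v ⬝ᵥ z) := by
      rw [smul_dotProduct, smul_eq_mul]
    have e7 : z ⬝ᵥ v = v ⬝ᵥ z := dotProduct_comm _ _
    have e5' : (Real.sqrt p * Real.sqrt p) * (z ⬝ᵥ (Sg *ᵥ z))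
        = Real.sqrt p * (z ⬝ᵥ v) - (V *ᵥ z) ⬝ᵥ (D *ᵥ (V *ᵥ z)) := by
      rw [hsq]; exact e5
    rw [e1, e2, e3, e4, e6, e7]
    linear_combination -e5' - Real.sqrt p * e7
  -- positivity
  have hpos : 0 < w ⬝ᵥ (Sg *ᵥ w) + (V *ᵥ z) ⬝ᵥ (D *ᵥ (V *ᵥ z)) := by
    by_cases hVz0 : V *ᵥ z = 0
    · have hw0 : w ≠ 0 := by
        intro h0
        apply hx
        have : y = Real.sqrt p • z := by
          have := sub_eq_zero.mp h0
          exact this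
        rw [this, mulVec_smul, hVz0, smul_zero]
      have h1 : 0 < w ⬝ᵥ (Sg *ᵥ w) := by
        have := hSg.dotProduct_mulVec_pos hw0
        simpa using this
      have h2 : 0 ≤ (V *ᵥ z) ⬝ᵥ (D *ᵥ (V *ᵥ z)) := by
        have := hD.posSemidef.dotProduct_mulVec_nonneg (V *ᵥ z)
        simpa using this
      linarith
    · have h1 : 0 ≤ w ⬝ᵥ (Sg *ᵥ w) := by
        have := hSg.posSemidef.dotProduct_mulVec_nonneg w
        simpa using this
      have h2 : 0 < (V *ᵥ z) ⬝ᵥ (D *ᵥ (V *ᵥ z)) := by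
        have := hD.dotProduct_mulVec_pos hVz0
        simpa using this
      linarith
  linarith [hident ▸ hpos]
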